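/- Let φ be a continuous flow on a compact metric space X. For every δ > 0 and t > 0 there exist α₀, β₀ ∈ (0, min{δ, 2t}) such that: if x, y ∈ X satisfy φ_a(x) = x and φ_b(y) = y for some a, b ∈ [t − α/2, t + α/2], and d(x, y) ≤ β, where 0 < α < α₀ and 0 < β < β₀, then y ∈ Γ_δ(x). -/

import Mathlib

/-- The dynamical ball `Γ_δ(x)` of a flow. -/
def Gamma {X : Type*} [MetricSpace X] (φ : ℝ → X → X) (δ : ℝ) (x : X) : Set X :=
  {y | ∃ h : ℝ → ℝ, Continuous h ∧ h 0 = 0 ∧ ∀ t : ℝ, dist (φ t x) (φ (h t) y) ≤ δ}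

/-- Integer multiples of a period are periods. -/
lemma flow_int_periodic {X : Type*} (φ : ℝ → X → X)
    (hzero : ∀ x, φ 0 x = x)
    (hadd : ∀ s t x, φ t (φ s x) = φ (t + s) x)
    {a : ℝ} {x : X} (hx : φ a x = x) (k : ℤ) : φ (k * a) x = x := by
  have hnat : ∀ n : ℕ, φ (n * a) x = x := by
    intro n
    induction n with
    | zero => simpa using hzero x
    | succ n ih =>
      have h1 : φ a (φ (n * a) x) = φ (a + n * a) x := hadd _ _ _
      rw [ih, hx] at h1
      have harg : ((n : ℝ) + 1) * a = a + n * a := by ring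
      push_cast
      rw [harg, ← h1]
  rcases Int.eq_nat_or_neg k with ⟨n, hn | hn⟩
  · rw [hn]; exact_mod_cast hnat n
  · have h1 : φ (-(n * a)) (φ (n * a) x) = φ (-(n * a) + n * a) x := hadd _ _ _
    rw [hnat n] at h1
    simp only [neg_add_cancel, hzero] at h1
    rw [hn]; push_cast; rw [neg_mul]; exact h1

/-- Nearby points on periodic orbits with nearly equal periods close to `t` lie in each
other's `δ`-dynamical ball. -/
theorem periodic_nearby_in_Gamma
    {X : Type*} [MetricSpace X] [CompactSpace X]
    (φ : ℝ → X → X)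
    (hcont : Continuous fun p : ℝ × X => φ p.1 p.2)
    (hzero : ∀ x, φ 0 x = x)
    (hadd : ∀ s t x, φ t (φ s x) = φ (t + s) x) :
    ∀ δ > 0, ∀ t > 0,
      ∃ α₀, 0 < α₀ ∧ α₀ < min δ (2 * t) ∧
      ∃ β₀, 0 < β₀ ∧ β₀ < min δ (2 * t) ∧
      ∀ (α β : ℝ), 0 < α → α < α₀ → 0 < β → β < β₀ →
        ∀ (x y : X) (a b : ℝ),
          φ a x = x → φ b y = y →
          a ∈ Set.Icc (t - α / 2) (t + α / 2) →
          b ∈ Set.Icc (t - α / 2) (t + α / 2) →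
          dist x y ≤ β → y ∈ Gamma φ δ x := by
  intro δ hδ t ht
  -- uniform continuity on the compact set [-(2t), 2t] × X
  set C : Set (ℝ × X) := Set.Icc (-(2 * t)) (2 * t) ×ˢ Set.univ with hC
  have hCc : IsCompact C := isCompact_Icc.prod isCompact_univ
  have hUC : UniformContinuousOn (fun p : ℝ × X => φ p.1 p.2) C :=
    hCc.uniformContinuousOn_of_continuous hcont.continuousOn
  rw [Metric.uniformContinuousOn_iff] at hUC
  obtain ⟨ε, hε, hεd⟩ := hUC (δ / 2) (by linarith)
  set m := min δ (2 * t) with hm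
  have hm0 : 0 < m := lt_min hδ (by linarith)
  have hmlt : min ε m / 2 < m := by
    have := min_le_right ε m; linarith
  have hmε : min ε m / 2 < ε := by
    have := min_le_left ε m; linarith
  refine ⟨min ε m / 2, by positivity, hmlt, min ε m / 2, by positivity, hmlt, ?_⟩
  intro α β hα hαα hβ hββ x y a b hxa hyb haI hbI hdxy
  have hα2t : α < 2 * t := lt_of_lt_of_le (hαα.trans hmlt) (min_le_right _ _)
  have hαε : α < ε := hαα.trans hmε
  have hβε : β < ε := hββ.trans hmε
  obtain ⟨ha1, ha2⟩ := haI
  obtain ⟨hb1, hb2⟩ := hbI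
  have ha0 : 0 < a := by linarith
  have ha2t : a < 2 * t := by linarith
  have hab : |b - a| ≤ α := by
    rw [abs_le]; constructor <;> linarith
  -- the reparametrization
  refine ⟨fun s => (b / a) * s, continuous_const.mul continuous_id, by simp, ?_⟩
  intro s
  set k : ℤ := ⌊s / a⌋ with hk
  set r : ℝ := s - k * a with hr
  have hr0 : 0 ≤ r := Int.sub_floor_div_mul_nonneg s ha0
  have hra : r < a := Int.sub_floor_div_mul_lt s ha0
  -- φ s x = φ r x
  have hx1 : φ s x = φ r x := by
    have h1 : φ r (φ (k * a) x) = φ (r + k * a) x := hadd _ _ _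
    rw [flow_int_periodic φ hzero hadd hxa k] at h1
    have : r + k * a = s := by rw [hr]; ring
    rw [this] at h1; rw [← h1]
  -- φ (h s) y = φ ((b/a) * r) y
  have hy1 : φ ((b / a) * s) y = φ ((b / a) * r) y := by
    have h1 : φ ((b / a) * r) (φ (k * b) y) = φ ((b / a) * r + k * b) y := hadd _ _ _
    rw [flow_int_periodic φ hzero hadd hyb k] at h1
    have harg : (b / a) * r + k * b = (b / a) * s := by
      rw [hr]; field_simp; ring
    rw [harg] at h1; rw [← h1]
  rw [hx1, hy1]
  -- split the distance
  have htri : dist (φ r x) (φ ((b / a) * r) y) ≤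
      dist (φ r x) (φ r y) + dist (φ r y) (φ ((b / a) * r) y) := dist_triangle _ _ _
  -- first term
  have hrC : (r, x) ∈ C ∧ (r, y) ∈ C := by
    constructor <;> exact ⟨⟨by linarith, by linarith⟩, Set.mem_univ _⟩
  have h1 : dist (φ r x) (φ r y) < δ / 2 := by
    have := hεd (r, x) hrC.1 (r, y) hrC.2 (by
      rw [Prod.dist_eq]; simp only [dist_self]
      rw [max_eq_right dist_nonneg]
      exact lt_of_le_of_lt hdxy hβε)
    simpa using this
  -- second term
  set u : ℝ := (b / a) * r - r with hu
  have huα : |u| ≤ α := by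
    have hkey : u * a = (b - a) * r := by rw [hu]; field_simp
    rw [abs_le] at hab ⊢
    have hA : (b - a) * r ≤ α * r := mul_le_mul_of_nonneg_right hab.2 hr0
    have hB : α * r ≤ α * a := mul_le_mul_of_nonneg_left hra.le hα.le
    have hA' : -α * r ≤ (b - a) * r := mul_le_mul_of_nonneg_right hab.1 hr0
    have hB' : -α * a ≤ -α * r := by
      rw [neg_mul, neg_mul]; exact neg_le_neg hB
    constructor
    · exact (mul_le_mul_iff_of_pos_right ha0).mp (hB'.trans (hA'.trans hkey.ge))
    · exact (mul_le_mul_iff_of_pos_right ha0).mp ((hkey.le.trans hA).trans hB)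
  have hu2 : φ ((b / a) * r) y = φ u (φ r y) := by
    have h1 : φ u (φ r y) = φ (u + r) y := hadd _ _ _
    have : u + r = (b / a) * r := by rw [hu]; ring
    rw [this] at h1; rw [h1]
  have h2 : dist (φ r y) (φ ((b / a) * r) y) < δ / 2 := by
    rw [hu2]
    have habs := abs_le.mp huα
    have hmem0 : ((0 : ℝ), φ r y) ∈ C :=
      ⟨⟨show -(2 * t) ≤ (0 : ℝ) by linarith, show (0 : ℝ) ≤ 2 * t by linarith⟩, Set.mem_univ _⟩
    have hmemu : (u, φ r y) ∈ C :=
      ⟨⟨show -(2 * t) ≤ u by linarith [habs.1], show u ≤ 2 * t by linarith [habs.2]⟩,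
        Set.mem_univ _⟩
    have hdp : dist ((0 : ℝ), φ r y) ((u, φ r y) : ℝ × X) < ε := by
      rw [Prod.dist_eq]
      simp only [dist_self]
      rw [max_eq_left dist_nonneg]
      have : dist (0 : ℝ) u = |u| := by rw [Real.dist_eq, zero_sub, abs_neg]
      rw [this]
      exact lt_of_le_of_lt huα hαε
    have := hεd (0, φ r y) hmem0 (u, φ r y) hmemu hdp
    simp only at this
    rw [hzero (φ r y)] at this
    exact this
  linarith
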